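/- Fix a real number t₁₂ and s ∈ ℂ, and natural numbers n₁, n₂. For every pair of reals (u, v) with u·v − t₁₂² > 0, the mixed iterated partial derivative ∂_u^{n₁}∂_v^{n₂} at (u,v) of the function (u,v) ↦ (u·v − t₁₂²)^{−s} equals Σ_{k=0}^{min(n₁,n₂)} k! · C(n₁,k) · C(n₂,k) · (−1)^{n₁+n₂+k} · u^{n₂−k} · v^{n₁−k} · (u·v − t₁₂²)^{−(s+n₁+n₂−k)} · Π_{l=0}^{n₁+n₂−k−1}(s+l). -/

import Mathlib

open Finset

private lemma iteratedDerivWithin_of_isOpen' {f : ℝ → ℂ} {s : Set ℝ} {x : ℝ} (n : ℕ)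
    (hs : IsOpen s) (hx : x ∈ s) :
    iteratedDerivWithin n f s x = iteratedDeriv n f x := by
  rw [iteratedDerivWithin_eq_iteratedFDerivWithin, iteratedDeriv_eq_iteratedFDeriv,
    iteratedFDerivWithin_of_isOpen n hs hx]

private lemma isOpen_aff (a c : ℝ) : IsOpen {x : ℝ | 0 < a * x - c} :=
  isOpen_lt continuous_const (by fun_prop)

private lemma hasDerivAt_aff_cpow (a c : ℝ) (w : ℂ) {x : ℝ} (hx : 0 < a * x - c) :
    HasDerivAt (fun y : ℝ => ((a * y - c : ℝ) : ℂ) ^ w)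
      (w * ((a * x - c : ℝ) : ℂ) ^ (w - 1) * (a : ℂ)) x := by
  have h0 : HasDerivAt (fun y : ℝ => a * y - c) a x := by
    simpa using ((hasDerivAt_id x).const_mul a).sub_const c
  have h1 : HasDerivAt (fun y : ℝ => ((a * y - c : ℝ) : ℂ)) ((a : ℝ) : ℂ) x := h0.ofReal_comp
  have h2 : HasDerivAt (fun z : ℂ => z ^ w) (w * ((a * x - c : ℝ) : ℂ) ^ (w - 1))
      (((a * x - c : ℝ)) : ℂ) :=
    (Complex.hasStrictDerivAt_cpow_const (Complex.ofReal_mem_slitPlane.2 hx)).hasDerivAt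
  have h3 := (h2.hasFDerivAt.restrictScalars ℝ).comp_hasDerivAt x h1
  simpa [Function.comp_def, mul_comm] using h3

private lemma hasDerivAt_pow_mul_cpow (a c : ℝ) (w : ℂ) (p : ℕ) {x : ℝ} (hx : 0 < a * x - c) :
    HasDerivAt (fun y : ℝ => (y : ℂ) ^ p * ((a * y - c : ℝ) : ℂ) ^ w)
      (((p : ℂ) * (x : ℂ) ^ (p - 1)) * ((a * x - c : ℝ) : ℂ) ^ w
        + (x : ℂ) ^ p * (w * ((a * x - c : ℝ) : ℂ) ^ (w - 1) * (a : ℂ))) x := by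
  have h1 : HasDerivAt (fun y : ℝ => (y : ℂ) ^ p) ((p : ℂ) * (x : ℂ) ^ (p - 1)) x := by
    have := (hasDerivAt_pow p x).ofReal_comp
    simpa using this
  exact h1.mul (hasDerivAt_aff_cpow a c w hx)

private lemma pascal_sum (n : ℕ) (F : ℕ → ℂ) :
    ∑ k ∈ Finset.range (n + 1), ((n.choose k : ℂ) * F (k + 1) + (n.choose k : ℂ) * F k)
      = ∑ j ∈ Finset.range (n + 2), ((n + 1).choose j : ℂ) * F j := by
  rw [Finset.sum_add_distrib]
  have h1 : ∑ j ∈ Finset.range (n + 2), ((n + 1).choose j : ℂ) * F j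
      = (∑ j ∈ Finset.range (n + 1), ((n + 1).choose (j + 1) : ℂ) * F (j + 1))
        + ((n + 1).choose 0 : ℂ) * F 0 := Finset.sum_range_succ' _ _
  have h2 : ∑ j ∈ Finset.range (n + 2), (n.choose j : ℂ) * F j
      = (∑ j ∈ Finset.range (n + 1), (n.choose (j + 1) : ℂ) * F (j + 1))
        + (n.choose 0 : ℂ) * F 0 := Finset.sum_range_succ' _ _
  have h3 : ∑ j ∈ Finset.range (n + 2), (n.choose j : ℂ) * F j
      = ∑ j ∈ Finset.range (n + 1), (n.choose j : ℂ) * F j := by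
    rw [Finset.sum_range_succ, Nat.choose_succ_self, Nat.cast_zero, zero_mul, add_zero]
  rw [h1]
  have hc : ∀ j ∈ Finset.range (n + 1),
      ((n + 1).choose (j + 1) : ℂ) * F (j + 1)
        = (n.choose j : ℂ) * F (j + 1) + (n.choose (j + 1) : ℂ) * F (j + 1) := by
    intro j _
    rw [Nat.choose_succ_succ]
    push_cast
    ring
  rw [Finset.sum_congr rfl hc, Finset.sum_add_distrib]
  have h4 : ∑ j ∈ Finset.range (n + 1), (n.choose (j + 1) : ℂ) * F (j + 1)
      = (∑ j ∈ Finset.range (n + 1), (n.choose j : ℂ) * F j) - (n.choose 0 : ℂ) * F 0 := by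
    rw [← h3, h2]; ring
  rw [h4]
  simp only [Nat.choose_zero_right, Nat.cast_one, one_mul]
  ring

private lemma key (C : ℂ) (a c : ℝ) (w : ℂ) (m : ℕ) (n : ℕ) :
    ∀ x : ℝ, 0 < a * x - c →
    iteratedDeriv n (fun y : ℝ => C * ((y : ℂ) ^ m * ((a * y - c : ℝ) : ℂ) ^ (-w))) x
      = ∑ k ∈ Finset.range (n + 1),
          C * (n.choose k : ℂ) * (m.descFactorial k : ℂ) * (x : ℂ) ^ (m - k)
            * (a : ℂ) ^ (n - k) * (-1) ^ (n - k)
            * (∏ l ∈ Finset.range (n - k), (w + l))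
            * ((a * x - c : ℝ) : ℂ) ^ (-(w + ((n - k : ℕ) : ℂ))) := by
  induction n with
  | zero =>
    intro x hx
    rw [iteratedDeriv_zero, Finset.sum_range_one]
    simp only [Nat.choose_self, Nat.descFactorial_zero, Nat.sub_zero, Nat.sub_self, pow_zero,
      Finset.prod_range_zero, Nat.cast_zero, Nat.cast_one, add_zero, mul_one, one_mul]
    ring
  | succ n IH =>
    intro x hx
    set F : ℕ → ℂ := fun j => C * (m.descFactorial j : ℂ) * (x : ℂ) ^ (m - j)
        * (a : ℂ) ^ (n + 1 - j) * (-1) ^ (n + 1 - j)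
        * (∏ l ∈ Finset.range (n + 1 - j), (w + l))
        * ((a * x - c : ℝ) : ℂ) ^ (-(w + ((n + 1 - j : ℕ) : ℂ))) with hF
    rw [iteratedDeriv_succ]
    have hev : (iteratedDeriv n fun y : ℝ => C * ((y : ℂ) ^ m * ((a * y - c : ℝ) : ℂ) ^ (-w)))
        =ᶠ[nhds x] fun y : ℝ => ∑ k ∈ Finset.range (n + 1),
          (C * (n.choose k : ℂ) * (m.descFactorial k : ℂ) * (a : ℂ) ^ (n - k) * (-1) ^ (n - k)
            * (∏ l ∈ Finset.range (n - k), (w + l)))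
            * ((y : ℂ) ^ (m - k) * ((a * y - c : ℝ) : ℂ) ^ (-(w + ((n - k : ℕ) : ℂ)))) := by
      filter_upwards [(isOpen_aff a c).mem_nhds hx] with y hy
      rw [IH y hy]
      exact Finset.sum_congr rfl fun k _ => by ring
    rw [hev.deriv_eq]
    rw [deriv_fun_sum (fun k _ => (((hasDerivAt_pow_mul_cpow a c (-(w + ((n - k : ℕ) : ℂ)))
      (m - k) hx).const_mul _)).differentiableAt)]
    have hstep : ∀ k ∈ Finset.range (n + 1),
        deriv (fun y : ℝ =>
          (C * (n.choose k : ℂ) * (m.descFactorial k : ℂ) * (a : ℂ) ^ (n - k) * (-1) ^ (n - k)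
            * (∏ l ∈ Finset.range (n - k), (w + l)))
            * ((y : ℂ) ^ (m - k) * ((a * y - c : ℝ) : ℂ) ^ (-(w + ((n - k : ℕ) : ℂ))))) x
        = (n.choose k : ℂ) * F (k + 1) + (n.choose k : ℂ) * F k := by
      intro k hk
      have hkn : k ≤ n := Nat.lt_succ_iff.1 (Finset.mem_range.1 hk)
      rw [(((hasDerivAt_pow_mul_cpow a c (-(w + ((n - k : ℕ) : ℂ)))
        (m - k) hx).const_mul _)).deriv]
      simp only [hF]
      rw [show n + 1 - (k + 1) = n - k from by omega,
        show n + 1 - k = (n - k) + 1 from by omega,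
        show m - (k + 1) = m - k - 1 from by omega,
        Nat.descFactorial_succ, Finset.prod_range_succ, pow_succ ((-1 : ℂ)),
        pow_succ ((a : ℂ)),
        show (-(w + (((n - k) + 1 : ℕ) : ℂ))) = -(w + ((n - k : ℕ) : ℂ)) - 1 from by
          push_cast; ring]
      push_cast
      ring
    rw [Finset.sum_congr rfl hstep, pascal_sum]
    exact Finset.sum_congr rfl fun j _ => by simp only [hF]; ring

private lemma key0 (a c : ℝ) (w : ℂ) (n : ℕ) {x : ℝ} (hx : 0 < a * x - c) :
    iteratedDeriv n (fun y : ℝ => ((a * y - c : ℝ) : ℂ) ^ (-w)) x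
      = (-1) ^ n * (a : ℂ) ^ n * (∏ l ∈ Finset.range n, (w + l))
        * ((a * x - c : ℝ) : ℂ) ^ (-(w + (n : ℂ))) := by
  have hfun : (fun y : ℝ => ((a * y - c : ℝ) : ℂ) ^ (-w))
      = fun y : ℝ => (1 : ℂ) * ((y : ℂ) ^ 0 * ((a * y - c : ℝ) : ℂ) ^ (-w)) := by
    funext y; rw [pow_zero, one_mul, one_mul]
  rw [hfun, key 1 a c w 0 n x hx]
  rw [Finset.sum_eq_single 0]
  · simp only [Nat.choose_zero_right, Nat.descFactorial_zero, Nat.sub_zero, pow_zero,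
      Nat.cast_one, one_mul]
    ring
  · intro k _ hk0
    obtain ⟨j, rfl⟩ := Nat.exists_eq_succ_of_ne_zero hk0
    simp [Nat.zero_descFactorial_succ]
  · intro h
    exact absurd (Finset.mem_range.2 (Nat.succ_pos n)) h

theorem iteratedDeriv_det_pow_mixed (t12 : ℝ) (s : ℂ) (n1 n2 : ℕ) (u v : ℝ)
    (huv : 0 < u * v - t12 ^ 2) :
    iteratedDerivWithin n1
      (fun u' : ℝ =>
        iteratedDerivWithin n2
          (fun v' : ℝ => ((u' * v' - t12 ^ 2 : ℝ) : ℂ) ^ (-s))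
          {v' : ℝ | 0 < u' * v' - t12 ^ 2} v)
      {u' : ℝ | 0 < u' * v - t12 ^ 2} u =
    ∑ k ∈ Finset.range (min n1 n2 + 1),
      (k.factorial : ℂ) * (n1.choose k : ℂ) * (n2.choose k : ℂ) * (-1) ^ (n1 + n2 + k) *
        (u : ℂ) ^ (n2 - k) * (v : ℂ) ^ (n1 - k) *
        ((u * v - t12 ^ 2 : ℝ) : ℂ) ^ (-(s + ((n1 + n2 - k : ℕ) : ℂ))) *
        ∏ l ∈ Finset.range (n1 + n2 - k), (s + l) := by
  have hSet : {u' : ℝ | 0 < u' * v - t12 ^ 2} = {x : ℝ | 0 < v * x - t12 ^ 2} := by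
    ext x; rw [Set.mem_setOf_eq, Set.mem_setOf_eq, mul_comm]
  rw [hSet]
  have hmem : u ∈ {x : ℝ | 0 < v * x - t12 ^ 2} := by
    show 0 < v * u - t12 ^ 2; rwa [mul_comm]
  -- the inner iterated derivative on the open region
  have hEq : Set.EqOn
      (fun u' : ℝ =>
        iteratedDerivWithin n2 (fun v' : ℝ => ((u' * v' - t12 ^ 2 : ℝ) : ℂ) ^ (-s))
          {v' : ℝ | 0 < u' * v' - t12 ^ 2} v)
      (fun u' : ℝ => ((-1) ^ n2 * ∏ l ∈ Finset.range n2, (s + l)) *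
        ((u' : ℂ) ^ n2 * ((v * u' - t12 ^ 2 : ℝ) : ℂ) ^ (-(s + (n2 : ℂ)))))
      {x : ℝ | 0 < v * x - t12 ^ 2} := by
    intro u' hu'
    have hu'v : 0 < u' * v - t12 ^ 2 := by
      have : (0 : ℝ) < v * u' - t12 ^ 2 := hu'
      rwa [mul_comm] at this
    simp only
    rw [iteratedDerivWithin_of_isOpen' n2 (isOpen_aff u' (t12 ^ 2)) hu'v,
      key0 u' (t12 ^ 2) s n2 hu'v, mul_comm u' v]
    ring
  have hUD : UniqueDiffOn ℝ {x : ℝ | 0 < v * x - t12 ^ 2} :=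
    (isOpen_aff v (t12 ^ 2)).uniqueDiffOn
  rw [iteratedDerivWithin_congr hEq hmem]
  rw [iteratedDerivWithin_of_isOpen' n1 (isOpen_aff v (t12 ^ 2)) hmem]
  rw [key ((-1) ^ n2 * ∏ l ∈ Finset.range n2, (s + l)) v (t12 ^ 2) (s + (n2 : ℂ)) n2 n1 u
    (by rwa [mul_comm] at huv)]
  rw [mul_comm v u]
  -- now identify the two finite sums
  have hsub : Finset.range (min n1 n2 + 1) ⊆ Finset.range (n1 + 1) :=
    Finset.range_subset_range.2 (by omega)
  rw [← Finset.sum_subset hsub (fun k hk1 hk2 => by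
    have hn2k : n2 < k := by
      simp only [Finset.mem_range] at hk1 hk2; omega
    rw [Nat.descFactorial_eq_zero_iff_lt.2 hn2k]
    simp)]
  refine Finset.sum_congr rfl fun k hk => ?_
  have hk1 : k ≤ n1 := by simp only [Finset.mem_range] at hk; omega
  have hk2 : k ≤ n2 := by simp only [Finset.mem_range] at hk; omega
  have hdesc : (n2.descFactorial k : ℂ) = (k.factorial : ℂ) * (n2.choose k : ℂ) := by
    rw [Nat.descFactorial_eq_factorial_mul_choose]; push_cast; ring
  have hsign : ((-1 : ℂ)) ^ n2 * (-1) ^ (n1 - k) = (-1) ^ (n1 + n2 + k) := by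
    rw [show n1 + n2 + k = n2 + (n1 - k) + 2 * k from by omega, pow_add, pow_add, pow_mul]
    norm_num
  have hprod : (∏ l ∈ Finset.range n2, (s + l)) * ∏ l ∈ Finset.range (n1 - k), (s + (n2 : ℂ) + l)
      = ∏ l ∈ Finset.range (n1 + n2 - k), (s + l) := by
    rw [show n1 + n2 - k = n2 + (n1 - k) from by omega, Finset.prod_range_add]
    congr 1
    exact Finset.prod_congr rfl fun l _ => by push_cast; ring
  have hexp : (-(s + (n2 : ℂ) + ((n1 - k : ℕ) : ℂ))) = -(s + ((n1 + n2 - k : ℕ) : ℂ)) := by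
    rw [show n1 + n2 - k = n2 + (n1 - k) from by omega]
    push_cast
    ring
  rw [hdesc, hexp, ← hprod, ← hsign]
  ring
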